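/- Let d ≥ 1. For every repulsion parameter β > 0 there exists ε = ε(β) > 0 such that the soft-core Widom-Rowlinson model on ℤ^d with a priori probability measure α on {-1,0,1} satisfies the Dobrushin condition c(γ) = sup_{i∈ℤ^d} Σ_{j≠i} C_{ij}(γ) < 1 whenever d_{TV}(α, δ_1) < ε or d_{TV}(α, δ_{−1}) < ε, where δ_{±1} denotes the Dirac measure at ±1 and d_{TV} the total variational distance. -/

import Mathlib

open Real Filter Finset Topology

/-- The local state space `{-1, 0, 1}` of the Widom-Rowlinson model. -/
abbrev Spin : Finset ℤ := {-1, 0, 1}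

/-- A probability vector on `{-1, 0, 1}`, encoded as a function `ℤ → ℝ`
supported on `{-1, 0, 1}`. -/
def IsProbVec (ν : ℤ → ℝ) : Prop :=
  (∀ s, 0 ≤ ν s) ∧ (∀ s, s ∉ Spin → ν s = 0) ∧ ∑ s ∈ Spin, ν s = 1

/-- The site space `ℤ^d`. -/
abbrev Site (d : ℕ) := Fin d → ℤ

/-- The number of nearest neighbors `j ∼ i` of site `i` whose spin `ω j` clashes
with the spin value `σ` at `i` (i.e. `σ · ω j = -1`). The neighbors of `i` are
exactly the sites `i ± e_k`, `k = 1, …, d`. -/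
noncomputable def clashCount {d : ℕ} (i : Site d) (σ : ℤ) (ω : Site d → Spin) : ℝ :=
  ∑ k : Fin d, ∑ ε ∈ ({-1, 1} : Finset ℤ),
    (if σ * (ω (Function.update i k (i k + ε)) : ℤ) = -1 then (1 : ℝ) else 0)

/-- The single-site specification kernel of the soft-core Widom-Rowlinson model on
`ℤ^d`: `γ_{{i}}(σ | ω) ∝ α(σ) exp(-β · #{j ∼ i : σ ω_j = -1})`. -/
noncomputable def scKernel (β : ℝ) (α : ℤ → ℝ) {d : ℕ} (i : Site d)
    (ω : Site d → Spin) (σ : ℤ) : ℝ :=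
  α σ * Real.exp (-β * clashCount i σ ω) /
    ∑ σ' ∈ Spin, α σ' * Real.exp (-β * clashCount i σ' ω)

/-- Total variational distance between two probability vectors on `{-1, 0, 1}`. -/
noncomputable def tvDist (p q : ℤ → ℝ) : ℝ := (1 / 2) * ∑ s ∈ Spin, |p s - q s|

/-- The Dobrushin interdependence matrix
`C_{ij}(γ) = sup { ‖γ_{{i}}(·|ω) - γ_{{i}}(·|η)‖_TV : ω = η off j }`. -/
noncomputable def dobMatrix (β : ℝ) (α : ℤ → ℝ) {d : ℕ} (i j : Site d) : ℝ :=
  sSup {r : ℝ | ∃ ω η : Site d → Spin, (∀ k, k ≠ j → ω k = η k) ∧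
    r = tvDist (scKernel β α i ω) (scKernel β α i η)}

/-- The Dobrushin constant `c(γ) = sup_i Σ_{j ≠ i} C_{ij}(γ)`. -/
noncomputable def dobConstant (β : ℝ) (α : ℤ → ℝ) (d : ℕ) : ℝ :=
  ⨆ i : Site d, ∑' j : Site d, if j = i then 0 else dobMatrix β α i j


/-- The Dirac measure at spin value `a`, as a probability vector on `{-1,0,1}`. -/
noncomputable def diracSpin (a : ℤ) : ℤ → ℝ := fun s => if s = a then 1 else 0

set_option maxHeartbeats 1000000

section Helpers

lemma sum_spin (f : ℤ → ℝ) : ∑ s ∈ Spin, f s = f (-1) + f 0 + f 1 := by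
  show ∑ s ∈ ({-1, 0, 1} : Finset ℤ), f s = _
  rw [Finset.sum_insert (by decide), Finset.sum_insert (by decide), Finset.sum_singleton]
  ring

lemma clash_nonneg {d : ℕ} (i : Site d) (σ : ℤ) (ω : Site d → Spin) :
    0 ≤ clashCount i σ ω := by
  unfold clashCount
  refine Finset.sum_nonneg fun k _ => Finset.sum_nonneg fun e _ => ?_
  split <;> norm_num

lemma clash_le {d : ℕ} (i : Site d) (σ : ℤ) (ω : Site d → Spin) :
    clashCount i σ ω ≤ 2 * d := by
  unfold clashCount
  calc (∑ k : Fin d, ∑ ε ∈ ({-1, 1} : Finset ℤ),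
        (if σ * (ω (Function.update i k (i k + ε)) : ℤ) = -1 then (1 : ℝ) else 0))
      ≤ ∑ _k : Fin d, ∑ _ε ∈ ({-1, 1} : Finset ℤ), (1 : ℝ) := by
        refine Finset.sum_le_sum fun k _ => Finset.sum_le_sum fun e _ => ?_
        split <;> norm_num
    _ = 2 * d := by
        simp [Finset.sum_const]
        ring

lemma Z_pos {β : ℝ} {α : ℤ → ℝ} {d : ℕ} (i : Site d) (ω : Site d → Spin)
    (hnn : ∀ s, 0 ≤ α s) {a : ℤ} (ha : a ∈ Spin) (hpos : 0 < α a) :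
    0 < ∑ σ' ∈ Spin, α σ' * Real.exp (-β * clashCount i σ' ω) := by
  exact Finset.sum_pos' (fun s _ => mul_nonneg (hnn s) (Real.exp_pos _).le)
    ⟨a, ha, mul_pos hpos (Real.exp_pos _)⟩

lemma Z_ge {β : ℝ} (hβ : 0 < β) {α : ℤ → ℝ} {d : ℕ} (i : Site d) (ω : Site d → Spin)
    (hnn : ∀ s, 0 ≤ α s) {a : ℤ} (ha : a ∈ Spin) :
    α a * Real.exp (-(2 * d * β)) ≤ ∑ σ' ∈ Spin, α σ' * Real.exp (-β * clashCount i σ' ω) := by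
  have h1 : α a * Real.exp (-(2 * d * β)) ≤ α a * Real.exp (-β * clashCount i a ω) := by
    refine mul_le_mul_of_nonneg_left (Real.exp_le_exp.mpr ?_) (hnn a)
    have h := clash_le i a ω
    have h2 : β * clashCount i a ω ≤ β * (2 * d) := mul_le_mul_of_nonneg_left h hβ.le
    linarith
  exact h1.trans (Finset.single_le_sum (f := fun σ' => α σ' * Real.exp (-β * clashCount i σ' ω))
    (fun s _ => mul_nonneg (hnn s) (Real.exp_pos _).le) ha)

lemma ker_nonneg {β : ℝ} {α : ℤ → ℝ} {d : ℕ} (i : Site d) (ω : Site d → Spin)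
    (hnn : ∀ s, 0 ≤ α s) {a : ℤ} (ha : a ∈ Spin) (hpos : 0 < α a) (s : ℤ) :
    0 ≤ scKernel β α i ω s :=
  div_nonneg (mul_nonneg (hnn s) (Real.exp_pos _).le) (Z_pos i ω hnn ha hpos).le

lemma ker_le {β : ℝ} (hβ : 0 < β) {α : ℤ → ℝ} {d : ℕ} (i : Site d) (ω : Site d → Spin)
    (hnn : ∀ s, 0 ≤ α s) {a : ℤ} (ha : a ∈ Spin) (hpos : 0 < α a) (s : ℤ) :
    scKernel β α i ω s ≤ α s * Real.exp (2 * d * β) / α a := by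
  unfold scKernel
  have hZ := Z_ge hβ i ω hnn ha
  have hden : 0 < α a * Real.exp (-(2 * d * β)) := mul_pos hpos (Real.exp_pos _)
  have hnum : α s * Real.exp (-β * clashCount i s ω) ≤ α s := by
    have h1 : Real.exp (-β * clashCount i s ω) ≤ 1 := by
      rw [Real.exp_le_one_iff]
      have := clash_nonneg i s ω
      nlinarith
    nlinarith [hnn s]
  calc α s * Real.exp (-β * clashCount i s ω) /
        ∑ σ' ∈ Spin, α σ' * Real.exp (-β * clashCount i σ' ω)
      ≤ α s / (α a * Real.exp (-(2 * d * β))) := div_le_div₀ (hnn s) hnum hden hZ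
    _ = α s * Real.exp (2 * d * β) / α a := by
        rw [Real.exp_neg]
        field_simp

lemma ker_sum {β : ℝ} {α : ℤ → ℝ} {d : ℕ} (i : Site d) (ω : Site d → Spin)
    (hnn : ∀ s, 0 ≤ α s) {a : ℤ} (ha : a ∈ Spin) (hpos : 0 < α a) :
    ∑ s ∈ Spin, scKernel β α i ω s = 1 := by
  unfold scKernel
  rw [← Finset.sum_div, div_self (Z_pos i ω hnn ha hpos).ne']

lemma tv_ker_le {β : ℝ} (hβ : 0 < β) {α : ℤ → ℝ} (hα : IsProbVec α) {a : ℤ}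
    (haa : a = 1 ∨ a = -1) (hpos : 0 < α a) {d : ℕ} (i : Site d) (ω η : Site d → Spin) :
    tvDist (scKernel β α i ω) (scKernel β α i η) ≤
      (1 - α a) * Real.exp (2 * d * β) / α a := by
  obtain ⟨hnn, hsupp, hsum⟩ := hα
  have hsumα : α (-1) + α 0 + α 1 = 1 := by rw [← sum_spin]; exact hsum
  have ha : a ∈ Spin := by rcases haa with rfl | rfl <;> decide
  set p := scKernel β α i ω with hp
  set q := scKernel β α i η with hq
  have hpn : ∀ s, 0 ≤ p s := ker_nonneg i ω hnn ha hpos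
  have hqn : ∀ s, 0 ≤ q s := ker_nonneg i η hnn ha hpos
  have hpb : ∀ s, p s ≤ α s * Real.exp (2 * d * β) / α a := ker_le hβ i ω hnn ha hpos
  have hqb : ∀ s, q s ≤ α s * Real.exp (2 * d * β) / α a := ker_le hβ i η hnn ha hpos
  have hps : p (-1) + p 0 + p 1 = 1 := by rw [← sum_spin]; exact ker_sum i ω hnn ha hpos
  have hqs : q (-1) + q 0 + q 1 = 1 := by rw [← sum_spin]; exact ker_sum i η hnn ha hpos
  rw [tvDist, sum_spin]
  set M := Real.exp (2 * d * β) with hMdef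
  rcases haa with rfl | rfl
  · have h1 : |p (-1) - q (-1)| ≤ α (-1) * M / α 1 :=
      abs_sub_le_iff.mpr ⟨by linarith [hpb (-1), hqn (-1)], by linarith [hqb (-1), hpn (-1)]⟩
    have h2 : |p 0 - q 0| ≤ α 0 * M / α 1 :=
      abs_sub_le_iff.mpr ⟨by linarith [hpb 0, hqn 0], by linarith [hqb 0, hpn 0]⟩
    have h3 : |p 1 - q 1| ≤ α (-1) * M / α 1 + α 0 * M / α 1 := by
      refine abs_sub_le_iff.mpr ⟨?_, ?_⟩
      · have : p 1 - q 1 = (q (-1) + q 0) - (p (-1) + p 0) := by linarith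
        rw [this]
        have := hqb (-1); have := hqb 0; have := hpn (-1); have := hpn 0
        linarith
      · have : q 1 - p 1 = (p (-1) + p 0) - (q (-1) + q 0) := by linarith
        rw [this]
        have := hpb (-1); have := hpb 0; have := hqn (-1); have := hqn 0
        linarith
    have hBB : α (-1) * M / α 1 + α 0 * M / α 1 = (1 - α 1) * M / α 1 := by
      rw [← add_div]
      congr 1
      have h : α (-1) + α 0 = 1 - α 1 := by linarith
      rw [← h]; ring
    linarith [h1, h2, h3, hBB]
  · have h1 : |p 0 - q 0| ≤ α 0 * M / α (-1) :=
      abs_sub_le_iff.mpr ⟨by linarith [hpb 0, hqn 0], by linarith [hqb 0, hpn 0]⟩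
    have h2 : |p 1 - q 1| ≤ α 1 * M / α (-1) :=
      abs_sub_le_iff.mpr ⟨by linarith [hpb 1, hqn 1], by linarith [hqb 1, hpn 1]⟩
    have h3 : |p (-1) - q (-1)| ≤ α 0 * M / α (-1) + α 1 * M / α (-1) := by
      refine abs_sub_le_iff.mpr ⟨?_, ?_⟩
      · have : p (-1) - q (-1) = (q 0 + q 1) - (p 0 + p 1) := by linarith
        rw [this]
        have := hqb 0; have := hqb 1; have := hpn 0; have := hpn 1
        linarith
      · have : q (-1) - p (-1) = (p 0 + p 1) - (q 0 + q 1) := by linarith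
        rw [this]
        have := hpb 0; have := hpb 1; have := hqn 0; have := hqn 1
        linarith
    have hBB : α 0 * M / α (-1) + α 1 * M / α (-1) = (1 - α (-1)) * M / α (-1) := by
      rw [← add_div]
      congr 1
      have h : α 0 + α 1 = 1 - α (-1) := by linarith
      rw [← h]; ring
    linarith [h1, h2, h3, hBB]

/-- The neighbors of a site. -/
def nbr {d : ℕ} (i : Site d) : Finset (Site d) :=
  Finset.image (fun p : Fin d × ℤ => Function.update i p.1 (i p.1 + p.2))
    (Finset.univ ×ˢ ({-1, 1} : Finset ℤ))

lemma nbr_card {d : ℕ} (i : Site d) : (nbr i).card ≤ 2 * d := by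
  refine (Finset.card_image_le).trans ?_
  rw [Finset.card_product, Finset.card_univ]
  simp [Fintype.card_fin]
  omega

lemma clash_eq {d : ℕ} (i j : Site d) (hj : j ∉ nbr i) (ω η : Site d → Spin)
    (hagree : ∀ k, k ≠ j → ω k = η k) (σ : ℤ) : clashCount i σ ω = clashCount i σ η := by
  unfold clashCount
  refine Finset.sum_congr rfl fun k _ => Finset.sum_congr rfl fun e he => ?_
  have hne : Function.update i k (i k + e) ≠ j := by
    intro h
    exact hj (h ▸ Finset.mem_image.mpr ⟨(k, e),
      Finset.mem_product.mpr ⟨Finset.mem_univ _, he⟩, rfl⟩)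
  rw [hagree _ hne]

lemma dob_zero (β : ℝ) (α : ℤ → ℝ) {d : ℕ} (i j : Site d) (hj : j ∉ nbr i) :
    dobMatrix β α i j = 0 := by
  unfold dobMatrix
  have hset : {r : ℝ | ∃ ω η : Site d → Spin, (∀ k, k ≠ j → ω k = η k) ∧
      r = tvDist (scKernel β α i ω) (scKernel β α i η)} = {0} := by
    ext r
    simp only [Set.mem_setOf_eq, Set.mem_singleton_iff]
    constructor
    · rintro ⟨ω, η, hag, rfl⟩
      have hker : scKernel β α i ω = scKernel β α i η := by
        funext σ
        unfold scKernel
        rw [clash_eq i j hj ω η hag σ]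
        congr 1
        exact Finset.sum_congr rfl fun s _ => by rw [clash_eq i j hj ω η hag s]
      rw [hker]
      simp [tvDist]
    · rintro rfl
      exact ⟨(fun _ => ⟨1, by decide⟩), (fun _ => ⟨1, by decide⟩),
        fun _ _ => rfl, by simp [tvDist]⟩
  rw [hset, csSup_singleton]

lemma dob_le {β : ℝ} (hβ : 0 < β) {α : ℤ → ℝ} (hα : IsProbVec α) {a : ℤ}
    (haa : a = 1 ∨ a = -1) (hpos : 0 < α a) (hle : α a ≤ 1) {d : ℕ} (i j : Site d) :
    dobMatrix β α i j ≤ (1 - α a) * Real.exp (2 * d * β) / α a := by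
  have hRnn : 0 ≤ (1 - α a) * Real.exp (2 * d * β) / α a :=
    div_nonneg (mul_nonneg (by linarith) (Real.exp_pos _).le) hpos.le
  refine Real.sSup_le ?_ hRnn
  rintro r ⟨ω, η, hag, rfl⟩
  exact tv_ker_le hβ hα haa hpos i ω η

end Helpers

/-- For every `β > 0` there is `ε > 0` such that the soft-core Widom-Rowlinson model
on `ℤ^d` satisfies the Dobrushin condition whenever the a priori measure `α` is
`ε`-close in total variational distance to `δ_1` or to `δ_{-1}`. -/
theorem dobrushin_near_dirac (d : ℕ) (hd : 1 ≤ d) (β : ℝ) (hβ : 0 < β) :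
    ∃ ε : ℝ, 0 < ε ∧ ∀ α : ℤ → ℝ, IsProbVec α →
      (tvDist α (diracSpin 1) < ε ∨ tvDist α (diracSpin (-1)) < ε) →
      dobConstant β α d < 1 := by
  set M := Real.exp (2 * d * β) with hMdef
  have hM1 : 1 ≤ M := Real.one_le_exp (by positivity)
  have hdpos : (0 : ℝ) < d := by exact_mod_cast hd
  have hMpos : 0 < M := lt_of_lt_of_le one_pos hM1
  refine ⟨1 / (8 * d * M), by positivity, ?_⟩
  intro α hα hclose
  obtain ⟨hnn, hsupp, hsum⟩ := hα
  have hsumα : α (-1) + α 0 + α 1 = 1 := by rw [← sum_spin]; exact hsum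
  have hεle : 1 / (8 * d * M) ≤ 1 / 8 := by
    apply one_div_le_one_div_of_le (by norm_num)
    have hd1 : (1 : ℝ) ≤ d := by exact_mod_cast hd
    nlinarith [mul_nonneg (sub_nonneg.mpr hd1) (sub_nonneg.mpr hM1)]
  have htv : ∀ a : ℤ, a = 1 ∨ a = -1 → α a ≤ 1 ∧ tvDist α (diracSpin a) = 1 - α a := by
    intro a haa
    rcases haa with rfl | rfl
    · constructor
      · linarith [hnn (-1), hnn 0]
      · rw [tvDist, sum_spin]
        simp only [diracSpin]
        norm_num
        rw [abs_of_nonneg (hnn (-1)), abs_of_nonneg (hnn 0),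
          abs_of_nonpos (by linarith [hnn (-1), hnn 0] : α 1 - 1 ≤ 0)]
        linarith
    · constructor
      · linarith [hnn 1, hnn 0]
      · rw [tvDist, sum_spin]
        simp only [diracSpin]
        norm_num
        rw [abs_of_nonneg (hnn 1), abs_of_nonneg (hnn 0),
          abs_of_nonpos (by linarith [hnn 1, hnn 0] : α (-1) - 1 ≤ 0)]
        linarith
  obtain ⟨a, haa, hclosea⟩ : ∃ a : ℤ, (a = 1 ∨ a = -1) ∧ 1 - α a < 1 / (8 * d * M) := by
    rcases hclose with h | h
    · exact ⟨1, Or.inl rfl, by rw [← (htv 1 (Or.inl rfl)).2]; exact h⟩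
    · exact ⟨-1, Or.inr rfl, by rw [← (htv (-1) (Or.inr rfl)).2]; exact h⟩
  have hle1 : α a ≤ 1 := (htv a haa).1
  have hpos : 0 < α a := by
    have : 1 - α a < 1 / 8 := lt_of_lt_of_le hclosea hεle
    linarith
  have h78 : (7 : ℝ) / 8 < α a := by
    have : 1 - α a < 1 / 8 := lt_of_lt_of_le hclosea hεle
    linarith
  set B := (1 - α a) * M / α a with hBdef
  have hBnn : 0 ≤ B := div_nonneg (mul_nonneg (by linarith) hMpos.le) hpos.le
  have hkey : 2 * d * B < 1 := by
    have h1 : 2 * d * M * (1 - α a) < 2 * d * M * (1 / (8 * d * M)) :=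
      mul_lt_mul_of_pos_left hclosea (by positivity)
    have h2 : 2 * d * M * (1 / (8 * d * M)) = 1 / 4 := by
      field_simp
      ring
    rw [hBdef, show 2 * (d : ℝ) * ((1 - α a) * M / α a) = (2 * d * M * (1 - α a)) / α a
      from by ring, div_lt_one hpos]
    linarith
  have hS : ∀ i : Site d,
      (∑' j : Site d, if j = i then 0 else dobMatrix β α i j) ≤ 2 * d * B := by
    intro i
    rw [tsum_eq_sum (s := nbr i) (fun j hj => ?_)]
    · calc (∑ j ∈ nbr i, if j = i then 0 else dobMatrix β α i j)
          ≤ (nbr i).card • B := by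
            refine Finset.sum_le_card_nsmul _ _ _ fun j _ => ?_
            split
            · exact hBnn
            · exact dob_le hβ ⟨hnn, hsupp, hsum⟩ haa hpos hle1 i j
        _ = ((nbr i).card : ℝ) * B := nsmul_eq_mul _ _
        _ ≤ 2 * d * B := by
            refine mul_le_mul_of_nonneg_right ?_ hBnn
            exact_mod_cast nbr_card i
    · split
      · rfl
      · exact dob_zero β α i j hj
  have : dobConstant β α d ≤ 2 * d * B := ciSup_le hS
  linarith
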